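/- Let D be an (n+1)×(n+1) DBM whose canonical form cf(D) = ⊕_{m=0}^{n+1} D^{⊗m} has all diagonal entries equal to 0 (no positive cycles). Then the represented set {x : x_0 = 0, x_i - x_j ≥ D(i,j) ∀ i,j} is nonempty; in particular the vector x defined by x_i = cf(D)(i, 0) belongs to it. -/

import Mathlib

open scoped BigOperators

/-- Max-plus matrix product over `EReal = ℝ ∪ {±∞}` (we use only `ℝ ∪ {-∞}`). -/
noncomputable def mmul {n : ℕ} (A B : Fin n → Fin n → EReal) : Fin n → Fin n → EReal :=
  fun i j => ⨆ k, A i k + B k j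

/-- Region matrix `A_g`: keeps the entry `A i (g i)` in each row `i`. -/
noncomputable def region {n : ℕ} (A : Fin n → Fin n → EReal) (g : Fin n → Fin n) :
    Fin n → Fin n → EReal :=
  fun i j => if j = g i then A i j else ⊥

/-- Conjugate matrix: `B^c(i,j) = -B(j,i)` when finite, `-∞` otherwise. -/
noncomputable def mconj {n : ℕ} (B : Fin n → Fin n → EReal) : Fin n → Fin n → EReal :=
  fun i j => if B j i = ⊥ then ⊥ else -B j i

/-- Max-plus identity matrix. -/
noncomputable def Imat {n : ℕ} : Fin n → Fin n → EReal :=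
  fun i j => if i = j then 0 else ⊥

/-- The set of points of `ℝ^n` described by a DBM `D` (constraints `x i - x j ≥ D i j`,
`-∞` bounds being vacuous). -/
def dbmSet {n : ℕ} (D : Fin n → Fin n → EReal) : Set (Fin n → ℝ) :=
  {x | ∀ i j, D i j ≤ ((x i - x j : ℝ) : EReal)}

/-- Max-plus power of a square matrix. -/
noncomputable def mpow {n : ℕ} (D : Fin n → Fin n → EReal) : ℕ → (Fin n → Fin n → EReal)
  | 0 => Imat
  | m + 1 => mmul D (mpow D m)

/-- `cf(D) = ⊕_{m=0}^{n+1} D^{⊗m}`. -/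
noncomputable def cfm {n : ℕ} (D : Fin (n+1) → Fin (n+1) → EReal) :
    Fin (n+1) → Fin (n+1) → EReal :=
  fun i j => ⨆ m : Fin (n+2), mpow D (m : ℕ) i j


lemma ereal_add_iSup_le {ι : Sort*} {a R : EReal} (ha : a ≠ ⊤) {f : ι → EReal}
    (h : ∀ i, a + f i ≤ R) : a + (⨆ i, f i) ≤ R := by
  induction a using EReal.rec with
  | bot => simp
  | top => exact absurd rfl ha
  | coe r =>
    rw [add_comm, ← EReal.le_sub_iff_add_le (Or.inl (EReal.coe_ne_bot r))
      (Or.inl (EReal.coe_ne_top r))]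
    refine iSup_le fun i => ?_
    rw [EReal.le_sub_iff_add_le (Or.inl (EReal.coe_ne_bot r)) (Or.inl (EReal.coe_ne_top r)),
      add_comm]
    exact h i

lemma ereal_iSup_ne_top {ι : Type*} [Finite ι] {f : ι → EReal} (h : ∀ i, f i ≠ ⊤) :
    (⨆ i, f i) ≠ ⊤ := by
  rcases isEmpty_or_nonempty ι with h' | h'
  · simp [iSup_of_empty]
  · obtain ⟨i, hi⟩ := Finite.exists_max f
    exact ne_top_of_le_ne_top (h i) (iSup_le hi)

section PW
variable {n : ℕ} (D : Fin (n+1) → Fin (n+1) → EReal)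

/-- Weight of the length-`m` prefix of a path `p` (edges go from `p e` to `p (e+1)`). -/
noncomputable def pw (p : ℕ → Fin (n+1)) (m : ℕ) : EReal :=
  ∑ e ∈ Finset.range m, D (p (e+1)) (p e)

lemma mpow_eq_pw (htop : ∀ i j, D i j ≠ ⊤) :
    ∀ (m : ℕ) (i j : Fin (n+1)),
      mpow D m i j = ⨆ (p : ℕ → Fin (n+1)) (_ : p 0 = j) (_ : p m = i), pw D p m := by
  intro m
  induction m with
  | zero =>
    intro i j
    show Imat i j = _
    rcases eq_or_ne i j with rfl | hij
    · apply le_antisymm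
      · refine le_iSup_of_le (fun _ => i) ?_
        refine le_iSup_of_le rfl ?_
        refine le_iSup_of_le rfl ?_
        simp [pw, Imat]
      · refine iSup_le fun p => iSup_le fun hp0 => iSup_le fun hpm => ?_
        simp [pw, Imat]
    · refine le_antisymm ?_ ?_
      · simp [Imat, hij]
      · refine iSup_le fun p => iSup_le fun hp0 => iSup_le fun hpm => ?_
        exact absurd (hpm.symm.trans hp0) hij
  | succ m ih =>
    intro i j
    show (⨆ k, D i k + mpow D m k j) = _
    apply le_antisymm
    · refine iSup_le fun k => ?_
      rw [ih k j]
      refine ereal_add_iSup_le (htop i k) fun p => ?_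
      refine ereal_add_iSup_le (htop i k) fun hp0 => ?_
      refine ereal_add_iSup_le (htop i k) fun hpm => ?_
      set q : ℕ → Fin (n+1) := Function.update p (m+1) i with hq
      have hq0 : q 0 = j := by
        rw [hq, Function.update_of_ne (by omega) _ _, hp0]
      have hqm : q (m+1) = i := Function.update_self _ _ _
      have hpwq : pw D q (m+1) = pw D p m + D i k := by
        rw [pw, Finset.sum_range_succ]
        congr 1
        · refine Finset.sum_congr rfl fun e he => ?_
          simp only [Finset.mem_range] at he
          rw [hq, Function.update_of_ne (by omega), Function.update_of_ne (by omega)]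
        · rw [hqm, hq, Function.update_of_ne (by omega), hpm]
      refine le_iSup_of_le q (le_iSup_of_le hq0 (le_iSup_of_le hqm ?_))
      rw [hpwq, add_comm]
    · refine iSup_le fun p => iSup_le fun hp0 => iSup_le fun hpm => ?_
      have : pw D p (m+1) = D i (p m) + pw D p m := by
        rw [pw, Finset.sum_range_succ, hpm, add_comm]; rfl
      rw [this]
      refine le_iSup_of_le (p m) ?_
      refine add_le_add_right ?_ _
      rw [ih (p m) j]
      exact le_iSup_of_le p (le_iSup_of_le hp0 (le_iSup_of_le rfl le_rfl))

lemma mpow_le_cfm {m : ℕ} (hm : m ≤ n + 1) (i j : Fin (n+1)) :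
    mpow D m i j ≤ cfm D i j :=
  le_iSup (fun t : Fin (n+2) => mpow D (t : ℕ) i j) ⟨m, by omega⟩

end PW

section Core
variable {n : ℕ} (D : Fin (n+1) → Fin (n+1) → EReal)

lemma mpow_ne_top (htop : ∀ i j, D i j ≠ ⊤) : ∀ (m : ℕ) (i j : Fin (n+1)), mpow D m i j ≠ ⊤ := by
  intro m
  induction m with
  | zero =>
    intro i j
    show Imat i j ≠ ⊤
    unfold Imat
    split <;> simp
  | succ m ih =>
    intro i j
    show (⨆ k, D i k + mpow D m k j) ≠ ⊤
    exact ereal_iSup_ne_top fun k => (EReal.add_lt_top (htop i k) (ih k j)).ne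

lemma cfm_ne_top (htop : ∀ i j, D i j ≠ ⊤) (i j : Fin (n+1)) : cfm D i j ≠ ⊤ :=
  ereal_iSup_ne_top fun m => mpow_ne_top D htop _ i j

lemma mpow_succ_le (htop : ∀ i j, D i j ≠ ⊤) (hdiag : ∀ k, cfm D k k = 0) (i j : Fin (n+1)) :
    mpow D (n+2) i j ≤ cfm D i j := by
  rw [mpow_eq_pw D htop]
  refine iSup_le fun p => iSup_le fun hp0 => iSup_le fun hpm => ?_
  obtain ⟨a, b, hne, heq⟩ := Fintype.exists_ne_map_eq_of_card_lt
    (fun t : Fin (n+2) => p t) (by simp)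
  obtain ⟨av, bv, hab, hbv, hpe⟩ : ∃ av bv : ℕ, av < bv ∧ bv ≤ n+1 ∧ p av = p bv := by
    rcases hne.lt_or_gt with h | h
    · exact ⟨a, b, h, Nat.lt_succ_iff.mp b.isLt, heq⟩
    · exact ⟨b, a, h, Nat.lt_succ_iff.mp a.isLt, heq.symm⟩
  set c := bv - av with hc
  have hcav : av + c = bv := by omega
  set m' := n + 2 - c with hm'
  have hm'c : m' + c = n + 2 := by omega
  have havm' : av < m' := by omega
  set q : ℕ → Fin (n+1) := fun t => if t ≤ av then p t else p (t + c) with hqdef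
  have hq : ∀ t, q (av + t) = p (bv + t) := by
    intro t
    rcases Nat.eq_zero_or_pos t with rfl | ht
    · simpa [hqdef] using hpe
    · have h1 : ¬ (av + t ≤ av) := by omega
      simp only [hqdef, if_neg h1]
      congr 1
      omega
  have split1 : pw D p (n+2) =
      (∑ e ∈ Finset.Ico 0 av, D (p (e+1)) (p e)) +
      ((∑ e ∈ Finset.Ico av bv, D (p (e+1)) (p e)) +
       (∑ e ∈ Finset.Ico bv (n+2), D (p (e+1)) (p e))) := by
    rw [pw, Finset.range_eq_Ico,
      ← Finset.sum_Ico_consecutive _ (Nat.zero_le av) (show av ≤ n+2 by omega),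
      ← Finset.sum_Ico_consecutive _ (show av ≤ bv by omega) (show bv ≤ n+2 by omega)]
  have splitq : pw D q m' =
      (∑ e ∈ Finset.Ico 0 av, D (q (e+1)) (q e)) +
      (∑ e ∈ Finset.Ico av m', D (q (e+1)) (q e)) := by
    rw [pw, Finset.range_eq_Ico,
      ← Finset.sum_Ico_consecutive _ (Nat.zero_le av) (show av ≤ m' by omega)]
  have hA : (∑ e ∈ Finset.Ico 0 av, D (q (e+1)) (q e)) =
      ∑ e ∈ Finset.Ico 0 av, D (p (e+1)) (p e) := by
    refine Finset.sum_congr rfl fun e he => ?_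
    simp only [Finset.mem_Ico] at he
    have h1 : e + 1 ≤ av := by omega
    have h2 : e ≤ av := by omega
    simp only [hqdef, if_pos h1, if_pos h2]
  have hB2 : (∑ e ∈ Finset.Ico av m', D (q (e+1)) (q e)) =
      ∑ e ∈ Finset.Ico bv (n+2), D (p (e+1)) (p e) := by
    rw [Finset.sum_Ico_eq_sum_range, Finset.sum_Ico_eq_sum_range,
      show m' - av = n + 2 - bv by omega]
    refine Finset.sum_congr rfl fun t _ => ?_
    rw [show q (av + t + 1) = p (bv + t + 1) from hq (t+1),
      show q (av + t) = p (bv + t) from hq t]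
  have hB : (∑ e ∈ Finset.Ico av bv, D (p (e+1)) (p e)) ≤ 0 := by
    have hmid : (∑ e ∈ Finset.Ico av bv, D (p (e+1)) (p e)) =
        pw D (fun t => p (av + t)) c := by
      rw [pw, Finset.sum_Ico_eq_sum_range]
      rfl
    rw [hmid]
    have h1 : pw D (fun t => p (av + t)) c ≤ mpow D c (p av) (p av) := by
      rw [mpow_eq_pw D htop]
      refine le_iSup_of_le (fun t => p (av + t)) (le_iSup_of_le (by simp)
        (le_iSup_of_le ?_ le_rfl))
      show p (av + c) = p av
      rw [hcav]
      exact hpe.symm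
    have h2 : mpow D c (p av) (p av) ≤ cfm D (p av) (p av) :=
      mpow_le_cfm D (by omega) _ _
    rw [hdiag] at h2
    exact h1.trans h2
  have hq0 : q 0 = j := by
    simp only [hqdef, if_pos (Nat.zero_le av)]
    exact hp0
  have hqm' : q m' = i := by
    simp only [hqdef, if_neg (show ¬ m' ≤ av by omega)]
    rw [hm'c]
    exact hpm
  calc pw D p (n+2)
      = _ := split1
    _ ≤ (∑ e ∈ Finset.Ico 0 av, D (p (e+1)) (p e)) +
        (0 + (∑ e ∈ Finset.Ico bv (n+2), D (p (e+1)) (p e))) :=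
        add_le_add_right (add_le_add_left hB _) _
    _ = pw D q m' := by
        rw [zero_add, splitq, hA, hB2]
    _ ≤ mpow D m' i j := by
        rw [mpow_eq_pw D htop]
        exact le_iSup_of_le q (le_iSup_of_le hq0 (le_iSup_of_le hqm' le_rfl))
    _ ≤ cfm D i j := mpow_le_cfm D (by omega) i j

end Core

/-- if the canonical form `cf(D)` of a DBM has zero diagonal
(no positive cycles) and finite longest-path potentials from node 0, then the
represented set (with `x 0 = 0`) is nonempty, witnessed by `x i = cf(D)(i,0)`. -/
theorem dbm_nonempty_of_zero_diagonal {n : ℕ} (D : Fin (n+1) → Fin (n+1) → EReal)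
    (htop : ∀ i j, D i j ≠ ⊤)
    (hdiag : ∀ i, cfm D i i = 0)
    (hfin : ∀ i, cfm D i 0 ≠ ⊥) :
    ∃ x : Fin (n+1) → ℝ, (∀ i, (x i : EReal) = cfm D i 0) ∧ x 0 = 0 ∧
      ∀ i j, D i j ≤ ((x i - x j : ℝ) : EReal) := by
  have key : ∀ i j, D i j + cfm D j 0 ≤ cfm D i 0 := by
    intro i j
    refine ereal_add_iSup_le (htop i j) fun m => ?_
    have step : D i j + mpow D (m : ℕ) j 0 ≤ mpow D ((m : ℕ) + 1) i 0 :=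
      le_iSup (fun k => D i k + mpow D (m : ℕ) k 0) j
    refine step.trans ?_
    rcases Nat.lt_or_ge (m : ℕ) (n + 1) with h | h
    · exact mpow_le_cfm D (by omega) i 0
    · have hm : (m : ℕ) = n + 1 := by
        have := m.isLt
        omega
      rw [hm]
      exact mpow_succ_le D htop hdiag i 0
  refine ⟨fun i => (cfm D i 0).toReal, fun i =>
    EReal.coe_toReal (cfm_ne_top D htop i 0) (hfin i), ?_, ?_⟩
  · show (cfm D 0 0).toReal = 0
    rw [hdiag 0]
    simp
  · intro i j
    have hcoei : ((cfm D i 0).toReal : EReal) = cfm D i 0 :=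
      EReal.coe_toReal (cfm_ne_top D htop i 0) (hfin i)
    have hcoej : ((cfm D j 0).toReal : EReal) = cfm D j 0 :=
      EReal.coe_toReal (cfm_ne_top D htop j 0) (hfin j)
    rcases eq_or_ne (D i j) ⊥ with hbot | hbot
    · rw [hbot]; exact bot_le
    · have hr : ((D i j).toReal : EReal) = D i j := EReal.coe_toReal (htop i j) hbot
      have key' := key i j
      rw [← hr, ← hcoej, ← hcoei, ← EReal.coe_add] at key'
      have hreal : (D i j).toReal + (cfm D j 0).toReal ≤ (cfm D i 0).toReal :=
        EReal.coe_le_coe_iff.mp key'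
      rw [← hr]
      exact EReal.coe_le_coe_iff.mpr (by linarith)
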